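/- Let Θ and R be finite sets and s : Θ → Δ(R). If s is monotone with respect to some linear orders on Θ and R, then s has no Type (2) forbidden triple: there do not exist three distinct states θ₁,θ₂,θ₃ ∈ Θ and four distinct actions r₁,r₂,r₃,r₄ ∈ R such that {r_k, r₄} ⊆ supp(s(θ_k)) for k = 1,2,3. -/
import Mathlib


/-- s θ is a probability distribution on a finite type, for each θ. -/
def IsMech {Θ R : Type*} [Fintype R] (s : Θ → R → ℝ) : Prop :=
  ∀ θ, (∀ r, 0 ≤ s θ r) ∧ ∑ r, s θ r = 1

/-- Monotonicity of s with respect to total orders: θ ≻ θ' (i.e. ¬ leΘ θ θ') implies every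
action in supp(s θ) is weakly above every action in supp(s θ'). -/
def MonoMech {Θ R : Type*} (s : Θ → R → ℝ) (leΘ : Θ → Θ → Prop) (leR : R → R → Prop) : Prop :=
  ∀ θ θ', ¬ leΘ θ θ' → ∀ r r', 0 < s θ r → 0 < s θ' r' → leR r' r

/-- A monotone mechanism has no Type (2) forbidden triple. -/
theorem stmt8 {Θ R : Type*} [Fintype Θ] [Fintype R]
    (s : Θ → R → ℝ) (hs : IsMech s)
    (leΘ : Θ → Θ → Prop) (leR : R → R → Prop)
    (hΘ : IsLinearOrder Θ leΘ) (hR : IsLinearOrder R leR)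
    (hmono : MonoMech s leΘ leR) :
    ¬ ∃ (θ₁ θ₂ θ₃ : Θ) (r₁ r₂ r₃ r₄ : R),
        θ₁ ≠ θ₂ ∧ θ₁ ≠ θ₃ ∧ θ₂ ≠ θ₃ ∧
        r₁ ≠ r₂ ∧ r₁ ≠ r₃ ∧ r₁ ≠ r₄ ∧ r₂ ≠ r₃ ∧ r₂ ≠ r₄ ∧ r₃ ≠ r₄ ∧
        0 < s θ₁ r₁ ∧ 0 < s θ₁ r₄ ∧
        0 < s θ₂ r₂ ∧ 0 < s θ₂ r₄ ∧
        0 < s θ₃ r₃ ∧ 0 < s θ₃ r₄ := by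
  haveI := hΘ; haveI := hR
  rintro ⟨θ₁, θ₂, θ₃, r₁, r₂, r₃, r₄, h12, h13, h23, -, -, h14, -, h24, h34,
    p11, p14, p22, p24, p33, p34⟩
  -- from inequality of states, one strictly dominates
  have gt_of_ne : ∀ a b : Θ, a ≠ b → ¬ leΘ a b ∨ ¬ leΘ b a := by
    intro a b hab
    rcases total_of leΘ a b with h | h
    · exact Or.inr (fun h' => hab (antisymm h h'))
    · exact Or.inl (fun h' => hab (antisymm h' h))
  have le_of : ∀ a b : Θ, ¬ leΘ a b → leΘ b a := fun a b h =>
    (total_of leΘ a b).resolve_left h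
  -- the middle state's action equals r₄
  have mid : ∀ (a b c : Θ) (rb : R), ¬ leΘ a b → ¬ leΘ b c →
      0 < s a r₄ → 0 < s b rb → 0 < s b r₄ → 0 < s c r₄ → rb = r₄ := by
    intro a b c rb hab hbc pa4 pb pb4 pc4
    exact antisymm (hmono a b hab r₄ rb pa4 pb) (hmono b c hbc rb r₄ pb pc4)
  rcases gt_of_ne θ₁ θ₂ h12 with g12 | g21 <;>
    rcases gt_of_ne θ₁ θ₃ h13 with g13 | g31 <;>
    rcases gt_of_ne θ₂ θ₃ h23 with g23 | g32
  · exact h24 (mid θ₁ θ₂ θ₃ r₂ g12 g23 p14 p22 p24 p34)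
  · exact h34 (mid θ₁ θ₃ θ₂ r₃ g13 g32 p14 p33 p34 p24)
  · exact g23 (trans_of leΘ (le_of θ₁ θ₂ g12) (le_of θ₃ θ₁ g31))
  · exact h14 (mid θ₃ θ₁ θ₂ r₁ g31 g12 p34 p11 p14 p24)
  · exact h14 (mid θ₂ θ₁ θ₃ r₁ g21 g13 p24 p11 p14 p34)
  · exact g32 (trans_of leΘ (le_of θ₁ θ₃ g13) (le_of θ₂ θ₁ g21))
  · exact h34 (mid θ₂ θ₃ θ₁ r₃ g23 g31 p24 p33 p34 p14)
  · exact h24 (mid θ₃ θ₂ θ₁ r₂ g32 g21 p34 p22 p24 p14)
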